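/- Let a : [0,T] → ℝ^{d×d} be given by a(t) = Σ_k Σ_{ν∈Δ^k} Γ^k(μ(t),ν) e_ν e_ν', where each Γ^k(μ(t),ν) ≥ 0 and each e_ν satisfies e_ν · 1 = 0. Suppose there is a subset Δ* ⊆ ∪_k Δ^k with Sp{e_ν : ν∈Δ*} = V_{d-1} and κ(T) := inf_{ν∈Δ*} inf_{0≤t≤T} Γ^{k_ν}(μ(t),ν) > 0. Let Q be an orthogonal matrix whose last column is (1/√d)·1 and define α(t) as the upper-left (d-1)×(d-1) block of Q'a(t)Q. Then there exists C(T) > 0 such that x'α(t)x ≥ C(T)‖x‖² for all x ∈ ℝ^{d-1} and all t ∈ [0,T]. -/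

import Mathlib

open scoped BigOperators

open Matrix in
lemma aux_quad_stmt3 (n : ℕ) (ι : Type) [Fintype ι] (e : ι → Fin (n+1) → ℝ)
    (Δstar : Finset ι)
    (hspan : (Submodule.span ℝ (e '' (Δstar : Set ι)) : Set (Fin (n + 1) → ℝ)) =
      {x : Fin (n + 1) → ℝ | ∑ i, x i = 0}) :
    ∃ m : ℝ, 0 < m ∧ ∀ v : Fin (n+1) → ℝ, (∑ i, v i = 0) →
      m * (∑ i, (v i)^2) ≤ ∑ ν ∈ Δstar, (e ν ⬝ᵥ v)^2 := by
  set B : (Fin (n+1) → ℝ) → ℝ := fun v => ∑ ν ∈ Δstar, (e ν ⬝ᵥ v)^2 with hB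
  have hBnonneg : ∀ v, 0 ≤ B v := fun v => Finset.sum_nonneg fun ν _ => sq_nonneg _
  have hBsmul : ∀ (r : ℝ) v, B (r • v) = r^2 * B v := by
    intro r v
    simp only [hB, dotProduct_smul, smul_eq_mul, mul_pow, Finset.mul_sum]
  have hB0 : ∀ v : Fin (n+1) → ℝ, (∑ i, v i = 0) → B v = 0 → v = 0 := by
    intro v hv hBv
    have hdot : ∀ ν ∈ Δstar, e ν ⬝ᵥ v = 0 := by
      intro ν hν
      have := (Finset.sum_eq_zero_iff_of_nonneg (fun ν _ => sq_nonneg (e ν ⬝ᵥ v))).1 hBv ν hν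
      exact pow_eq_zero_iff (by norm_num) |>.1 this
    have hvmem : v ∈ Submodule.span ℝ (e '' (Δstar : Set ι)) := by
      have : v ∈ ({x : Fin (n + 1) → ℝ | ∑ i, x i = 0} : Set _) := hv
      rw [← hspan] at this; exact this
    have hall : ∀ w ∈ Submodule.span ℝ (e '' (Δstar : Set ι)), w ⬝ᵥ v = 0 := by
      intro w hw
      induction hw using Submodule.span_induction with
      | mem w hw =>
        obtain ⟨ν, hν, rfl⟩ := hw
        exact hdot ν (by exact_mod_cast hν)
      | zero => simp
      | add w₁ w₂ _ _ h1 h2 => rw [add_dotProduct, h1, h2, add_zero]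
      | smul r w _ h => rw [smul_dotProduct, h, smul_zero]
    have hvv : v ⬝ᵥ v = 0 := hall v hvmem
    have : ∀ i, v i = 0 := by
      intro i
      have h := (Finset.sum_eq_zero_iff_of_nonneg
        (fun i _ => mul_self_nonneg (v i))).1 hvv i (Finset.mem_univ i)
      exact mul_self_eq_zero.1 h
    funext i; exact this i
  set K : Set (Fin (n+1) → ℝ) := {v | (∑ i, v i = 0) ∧ ∑ i, (v i)^2 = 1} with hK
  have hcont1 : Continuous fun v : Fin (n+1) → ℝ => ∑ i, v i :=
    continuous_finset_sum _ fun i _ => continuous_apply i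
  have hcont2 : Continuous fun v : Fin (n+1) → ℝ => ∑ i, (v i)^2 :=
    continuous_finset_sum _ fun i _ => (continuous_apply i).pow 2
  have hBcont : Continuous B := by
    simp only [hB, dotProduct]
    exact continuous_finset_sum _ fun ν _ =>
      (continuous_finset_sum _ fun i _ => continuous_const.mul (continuous_apply i)).pow 2
  have hKclosed : IsClosed K := by
    have := (isClosed_singleton (x := (0:ℝ))).preimage hcont1
    have := (isClosed_singleton (x := (1:ℝ))).preimage hcont2
    exact IsClosed.inter ‹IsClosed ((fun v : Fin (n+1) → ℝ => ∑ i, v i) ⁻¹' {0})›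
      ‹IsClosed ((fun v : Fin (n+1) → ℝ => ∑ i, (v i)^2) ⁻¹' {1})›
  have hKbdd : Bornology.IsBounded K := by
    apply (Metric.isBounded_closedBall (x := (0 : Fin (n+1) → ℝ)) (r := 1)).subset
    intro v hv
    rw [Metric.mem_closedBall, dist_zero_right]
    rw [pi_norm_le_iff_of_nonneg zero_le_one]
    intro i
    rw [Real.norm_eq_abs, abs_le_one_iff_mul_self_le_one, ← sq]
    calc (v i)^2 ≤ ∑ j, (v j)^2 :=
          Finset.single_le_sum (fun j _ => sq_nonneg (v j)) (Finset.mem_univ i)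
      _ = 1 := hv.2
  have hKcompact : IsCompact K := Metric.isCompact_of_isClosed_isBounded hKclosed hKbdd
  have hnorm : ∀ v : Fin (n+1) → ℝ, (∑ i, v i = 0) → 0 < ∑ i, (v i)^2 →
      ((Real.sqrt (∑ i, (v i)^2))⁻¹ • v) ∈ K ∧
      B v = (∑ i, (v i)^2) * B ((Real.sqrt (∑ i, (v i)^2))⁻¹ • v) := by
    intro v hv hs
    set s := ∑ i, (v i)^2 with hsdef
    have hsqrt : Real.sqrt s > 0 := Real.sqrt_pos.2 hs
    constructor
    · constructor
      · simp only [Pi.smul_apply, smul_eq_mul, ← Finset.mul_sum, hv, mul_zero]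
      · simp only [Pi.smul_apply, smul_eq_mul, mul_pow, ← Finset.mul_sum, ← hsdef]
        rw [← Real.sqrt_inv, Real.sq_sqrt (inv_nonneg.2 hs.le), inv_mul_cancel₀ hs.ne']
    · rw [hBsmul, ← Real.sqrt_inv, Real.sq_sqrt (inv_nonneg.2 hs.le), ← mul_assoc,
        mul_inv_cancel₀ hs.ne', one_mul]
  by_cases hKne : K.Nonempty
  · obtain ⟨v₀, hv₀K, hmin⟩ := hKcompact.exists_isMinOn hKne hBcont.continuousOn
    refine ⟨B v₀, ?_, ?_⟩
    · rcases lt_or_eq_of_le (hBnonneg v₀) with h | h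
      · exact h
      · exfalso
        have := hB0 v₀ hv₀K.1 h.symm
        rw [this] at hv₀K
        simpa using hv₀K.2
    · intro v hv
      rcases (Finset.sum_nonneg fun i _ => sq_nonneg (v i)).lt_or_eq with hs | hs
      · obtain ⟨hwK, hBvs⟩ := hnorm v hv hs
        have := hmin hwK
        show B v₀ * (∑ i, (v i)^2) ≤ B v
        rw [hBvs]
        calc B v₀ * (∑ i, (v i)^2) ≤ B ((Real.sqrt (∑ i, (v i)^2))⁻¹ • v) * (∑ i, (v i)^2) :=
              mul_le_mul_of_nonneg_right this hs.le
          _ = (∑ i, (v i)^2) * B ((Real.sqrt (∑ i, (v i)^2))⁻¹ • v) := mul_comm _ _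
      · rw [← hs, mul_zero]; exact hBnonneg v
  · refine ⟨1, one_pos, fun v hv => ?_⟩
    rcases (Finset.sum_nonneg fun i _ => sq_nonneg (v i)).lt_or_eq with hs | hs
    · exact absurd ⟨_, (hnorm v hv hs).1⟩ hKne
    · rw [← hs, mul_zero]; exact hBnonneg v

open Matrix in
lemma aux_sub_stmt3 (n : ℕ) (M : Matrix (Fin (n+1)) (Fin (n+1)) ℝ) (x : Fin n → ℝ) :
    x ⬝ᵥ (M.submatrix Fin.castSucc Fin.castSucc).mulVec x
      = (Fin.snoc x 0 : Fin (n+1) → ℝ) ⬝ᵥ M.mulVec (Fin.snoc x 0) := by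
  simp [dotProduct, Matrix.mulVec, Matrix.submatrix, Fin.sum_univ_castSucc]

open Matrix in
lemma aux_conj_stmt3 (n : ℕ) (Q a : Matrix (Fin (n+1)) (Fin (n+1)) ℝ) (y : Fin (n+1) → ℝ) :
    y ⬝ᵥ (Q.transpose * a * Q).mulVec y = (Q.mulVec y) ⬝ᵥ a.mulVec (Q.mulVec y) := by
  rw [← Matrix.mulVec_mulVec, ← Matrix.mulVec_mulVec, dotProduct_mulVec,
    Matrix.vecMul_transpose]

open Matrix in
lemma aux_quadform_stmt3 (n : ℕ) (ι : Type) [Fintype ι] (e : ι → Fin (n+1) → ℝ) (c : ι → ℝ)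
    (w : Fin (n+1) → ℝ) :
    w ⬝ᵥ (∑ ν, c ν • Matrix.vecMulVec (e ν) (e ν)).mulVec w
      = ∑ ν, c ν * (e ν ⬝ᵥ w)^2 := by
  simp only [Matrix.mulVec, dotProduct, Matrix.sum_apply, Matrix.smul_apply,
    Matrix.vecMulVec_apply, smul_eq_mul, Finset.sum_mul, Finset.mul_sum]
  rw [show (∑ x : Fin (n+1), ∑ y : Fin (n+1), ∑ i : ι, w x * (c i * (e i x * e i y) * w y))
      = ∑ x : Fin (n+1), ∑ i : ι, ∑ y : Fin (n+1), w x * (c i * (e i x * e i y) * w y)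
      from Finset.sum_congr rfl fun x _ => Finset.sum_comm, Finset.sum_comm]
  refine Finset.sum_congr rfl fun ν _ => ?_
  simp only [sq, Finset.sum_mul, Finset.mul_sum]
  refine Finset.sum_congr rfl fun i _ => Finset.sum_congr rfl fun j _ => by ring

open Matrix in
lemma aux_sumv_stmt3 (n : ℕ) (Q : Matrix (Fin (n + 1)) (Fin (n + 1)) ℝ)
    (hQorth : Q.transpose * Q = 1 ∧ Q * Q.transpose = 1)
    (hlast : ∀ i, Q i (Fin.last n) = 1 / Real.sqrt (n + 1)) (x : Fin n → ℝ) :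
    ∑ i, Q.mulVec (Fin.snoc x 0 : Fin (n+1) → ℝ) i = 0 := by
  have hd : (0:ℝ) < Real.sqrt (n+1) := Real.sqrt_pos.2 (by positivity)
  have hcol : ∀ j, ∑ i, Q i j = Real.sqrt (n+1) * (if Fin.last n = j then 1 else 0) := by
    intro j
    have h1 : (Q.transpose * Q) (Fin.last n) j
        = (1 : Matrix (Fin (n+1)) (Fin (n+1)) ℝ) (Fin.last n) j := by
      rw [hQorth.1]
    rw [Matrix.mul_apply, Matrix.one_apply] at h1
    simp only [Matrix.transpose_apply, hlast] at h1
    have h2 : (1 / Real.sqrt (n+1)) * ∑ i, Q i j = (if Fin.last n = j then 1 else 0) := by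
      rw [Finset.mul_sum]; exact h1
    field_simp at h2
    rw [h2, mul_ite, mul_one, mul_zero]
  calc ∑ i, Q.mulVec (Fin.snoc x 0 : Fin (n+1) → ℝ) i
      = ∑ j, (∑ i, Q i j) * (Fin.snoc x 0 : Fin (n+1) → ℝ) j := by
        simp only [Matrix.mulVec, dotProduct, Finset.sum_mul]
        rw [Finset.sum_comm]
    _ = 0 := by
        simp only [hcol]
        rw [Finset.sum_eq_single (Fin.last n)]
        · simp
        · intro j _ hj; simp [Ne.symm hj]
        · simp

/-- Lemma 2.1 of the paper (uniform non-degeneracy of `α`). With `d = n+1`,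
`a(t) = ∑_ν c(t,ν) e_ν e_ν'` where the rates `c(t,ν) = Γ^{k}(μ(t),ν)` are nonnegative and each
`e_ν` sums to zero; a subset `Δ*` spans `V_{d-1}` and the rates over `Δ*` are uniformly bounded
below by `κ(T) > 0` on `[0,T]`. `Q` is orthogonal with last column `(1/√d)·1`, and `α(t)` is the
upper-left `(d-1)×(d-1)` block of `Q' a(t) Q`. Then there is `C(T) > 0` with
`x' α(t) x ≥ C(T) ‖x‖²` for all `x ∈ ℝ^{d-1}` and `t ∈ [0,T]`. -/
theorem stmt3 (n : ℕ) (T : ℝ) (hT : 0 < T) (ι : Type) [Fintype ι]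
    (e : ι → Fin (n + 1) → ℝ) (he : ∀ ν, ∑ i, e ν i = 0)
    (c : ℝ → ι → ℝ) (hc : ∀ t ∈ Set.Icc (0 : ℝ) T, ∀ ν, 0 ≤ c t ν)
    (Δstar : Finset ι)
    (hspan : (Submodule.span ℝ (e '' (Δstar : Set ι)) : Set (Fin (n + 1) → ℝ)) =
      {x : Fin (n + 1) → ℝ | ∑ i, x i = 0})
    (κ : ℝ) (hκ : 0 < κ)
    (hrate : ∀ ν ∈ Δstar, ∀ t ∈ Set.Icc (0 : ℝ) T, κ ≤ c t ν)
    (Q : Matrix (Fin (n + 1)) (Fin (n + 1)) ℝ)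
    (hQorth : Q.transpose * Q = 1 ∧ Q * Q.transpose = 1)
    (hlast : ∀ i, Q i (Fin.last n) = 1 / Real.sqrt (n + 1)) :
    ∃ C : ℝ, 0 < C ∧ ∀ t ∈ Set.Icc (0 : ℝ) T, ∀ x : Fin n → ℝ,
      C * (∑ i, (x i) ^ 2) ≤
        dotProduct x
          (((Q.transpose * (∑ ν, c t ν • Matrix.vecMulVec (e ν) (e ν)) * Q).submatrix
              Fin.castSucc Fin.castSucc).mulVec x) := by
  obtain ⟨m, hm, hmbound⟩ := aux_quad_stmt3 n ι e Δstar hspan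
  refine ⟨κ * m, mul_pos hκ hm, fun t ht x => ?_⟩
  set y : Fin (n+1) → ℝ := Fin.snoc x 0 with hy
  set v : Fin (n+1) → ℝ := Q.mulVec y with hv
  -- rewrite the quadratic form
  rw [aux_sub_stmt3, aux_conj_stmt3, ← hy, ← hv, aux_quadform_stmt3]
  -- sum of v is zero
  have hvsum : ∑ i, v i = 0 := aux_sumv_stmt3 n Q hQorth hlast x
  -- norms agree
  have hvnorm : ∑ i, (v i)^2 = ∑ i, (x i)^2 := by
    have h1 : dotProduct v v = dotProduct y y := by
      have h := aux_conj_stmt3 n Q 1 y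
      rw [mul_one, hQorth.1, Matrix.one_mulVec, Matrix.one_mulVec] at h
      rw [hv]; exact h.symm
    have h2 : dotProduct v v = ∑ i, (v i)^2 := by
      simp [dotProduct, sq]
    have h3 : dotProduct y y = ∑ i, (x i)^2 := by
      simp [dotProduct, hy, Fin.sum_univ_castSucc, sq]
    rw [← h2, h1, h3]
  -- chain of inequalities
  calc κ * m * (∑ i, (x i)^2)
      = κ * (m * (∑ i, (v i)^2)) := by rw [hvnorm, mul_assoc]
    _ ≤ κ * (∑ ν ∈ Δstar, (dotProduct (e ν) v)^2) :=
        mul_le_mul_of_nonneg_left (hmbound v hvsum) hκ.le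
    _ = ∑ ν ∈ Δstar, κ * (dotProduct (e ν) v)^2 := Finset.mul_sum _ _ _
    _ ≤ ∑ ν ∈ Δstar, c t ν * (dotProduct (e ν) v)^2 :=
        Finset.sum_le_sum fun ν hν =>
          mul_le_mul_of_nonneg_right (hrate ν hν t ht) (sq_nonneg _)
    _ ≤ ∑ ν, c t ν * (dotProduct (e ν) v)^2 :=
        Finset.sum_le_sum_of_subset_of_nonneg (Finset.subset_univ _)
          (fun ν _ _ => mul_nonneg (hc t ht ν) (sq_nonneg _))
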